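/- For the parameter sequences of the linearized ASGARD algorithm, for every integer k ≥ 0 one has 1/(k+1) ≤ τ_k ≤ 2/(k+2), β_k ≤ β_0/(k+1), and τ_k² B_{k+1} ≤ B_1/(k+1). -/

import Mathlib

lemma stmt7_up (d t a : ℝ) (hd : 2 ≤ d) (ht : 0 < t) (ha : 0 < a)
    (ha2 : a * d ≤ 2) (h : t ^ 2 ≤ a ^ 2 * (1 - t)) : t * (d + 1) ≤ 2 := by
  by_contra hcon
  push_neg at hcon
  nlinarith [sq_nonneg (a * d), mul_pos ha ht, sq_nonneg (t * (d + 1) - a * d),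
    mul_pos (mul_pos ha ha) ht, sq_nonneg (a - t), mul_pos ht ht]

lemma stmt7_low (d t a : ℝ) (hd : 1 ≤ d) (ht : 0 < t) (ha : 0 < a)
    (ha2 : 1 ≤ a * d) (h : a ^ 2 * (1 - t) ≤ t ^ 3 + t ^ 2) : 1 ≤ t * (d + 1) := by
  by_contra hcon
  push_neg at hcon
  nlinarith [mul_pos ht ht, mul_pos (mul_pos ht ht) ht, sq_nonneg (t * (d+1) - 1),
    mul_pos ha ht, sq_nonneg (a * d - 1), mul_pos (mul_pos ha ha) ht]

set_option maxHeartbeats 1000000 in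
theorem stmt7 (L m β0 : ℝ) (hL : 0 ≤ L) (hm : 0 < m) (hβ0pos : 0 < β0)
    (τ β B : ℕ → ℝ)
    (hτpos : ∀ k, 0 < τ k) (hτ0 : τ 0 = 1)
    (hβinit : β 0 = β0)
    (hβrec : ∀ k, β (k + 1) = β k / (1 + τ k))
    (hBrec : ∀ k, B (k + 1) = L + m / β (k + 1))
    (hcubic : ∀ k, (B (k + 1) - L) / B (k + 1) * τ (k + 1) ^ 3 + τ (k + 1) ^ 2
        + τ k ^ 2 * τ (k + 1) - τ k ^ 2 = 0) :
    ∀ k : ℕ, 1 / ((k : ℝ) + 1) ≤ τ k ∧ τ k ≤ 2 / ((k : ℝ) + 2) ∧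
      β k ≤ β0 / ((k : ℝ) + 1) ∧ τ k ^ 2 * B (k + 1) ≤ B 1 / ((k : ℝ) + 1) := by
  have hβpos : ∀ k, 0 < β k := by
    intro k
    induction k with
    | zero => rw [hβinit]; exact hβ0pos
    | succ k ih =>
      rw [hβrec]
      exact div_pos ih (by linarith [hτpos k])
  have hBpos : ∀ k, 0 < B (k + 1) := by
    intro k
    rw [hBrec]
    have := hβpos (k + 1)
    positivity
  have hBsub : ∀ k, B (k + 1) - L = m / β (k + 1) := by
    intro k; rw [hBrec]; ring
  have hBsubpos : ∀ k, 0 < B (k + 1) - L := by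
    intro k; rw [hBsub]; exact div_pos hm (hβpos _)
  intro k
  induction k with
  | zero =>
    refine ⟨by rw [hτ0]; norm_num, by rw [hτ0]; norm_num,
      by rw [hβinit]; norm_num, by rw [hτ0]; norm_num⟩
  | succ k ih =>
    obtain ⟨ih1, ih2, ih3, ih4⟩ := ih
    set n : ℝ := (k : ℝ) with hn
    have hn0 : (0 : ℝ) ≤ n := Nat.cast_nonneg k
    push_cast
    have ht : 0 < τ (k + 1) := hτpos (k + 1)
    have ha : 0 < τ k := hτpos k
    set t := τ (k + 1)
    set a := τ k
    have hB1 : 0 < B (k + 1) := hBpos k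
    have hc1 : B (k + 1) - L ≤ B (k + 1) := by linarith
    -- consequences of the cubic
    have cub := hcubic k
    have hctpos : 0 < (B (k + 1) - L) / B (k + 1) * t ^ 3 :=
      mul_pos (div_pos (hBsubpos k) hB1) (by positivity)
    have hcle : (B (k + 1) - L) / B (k + 1) ≤ 1 :=
      (div_le_one hB1).2 hc1
    have h1 : t ^ 2 ≤ a ^ 2 * (1 - t) := by nlinarith
    have h2 : a ^ 2 * (1 - t) ≤ t ^ 3 + t ^ 2 := by
      nlinarith [mul_nonneg (sub_nonneg.2 hcle) (by positivity : (0:ℝ) ≤ t ^ 3)]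
    -- τ bounds
    have hup : t * ((n + 3)) ≤ 2 := by
      have := stmt7_up (n + 2) t a (by linarith) ht ha
        ((le_div_iff₀ (by linarith)).1 ih2) h1
      linarith
    have hlow : 1 ≤ t * (n + 2) := by
      have := stmt7_low (n + 1) t a (by linarith) ht ha
        ((div_le_iff₀ (by linarith)).1 ih1) h2
      linarith
    have hτlow : 1 / (n + 1 + 1) ≤ t := by
      rw [div_le_iff₀ (by linarith)]; linarith
    have hτup : t ≤ 2 / (n + 1 + 2) := by
      rw [le_div_iff₀ (by linarith)]; linarith
    refine ⟨hτlow, hτup, ?_, ?_⟩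
    · -- β bound
      rw [hβrec]
      rw [div_le_div_iff₀ (by linarith) (by linarith)]
      have hβk := hβpos k
      have h3 : β k * (n + 1) ≤ β0 := (le_div_iff₀ (by linarith)).1 ih3
      have h4 : 1 ≤ a * (n + 1) := (div_le_iff₀ (by linarith)).1 ih1
      nlinarith [mul_nonneg hβ0pos.le (sub_nonneg.2 h4),
        mul_nonneg (sub_nonneg.2 h3) (by linarith : (0:ℝ) ≤ n + 2)]
    · -- B bound
      have hβk1 := hβpos (k + 1)
      have hB2 : B (k + 2) = B (k + 1) + (B (k + 1) - L) * t := by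
        have e1 : m / β (k + 2) = m / β (k + 1) * (1 + t) := by
          rw [hβrec (k + 1)]
          field_simp
          rfl
        rw [hBrec (k + 1), e1, ← hBsub k]
        ring
      have cub' : (B (k + 1) - L) * t ^ 3 + B (k + 1) * t ^ 2
          + B (k + 1) * a ^ 2 * t - B (k + 1) * a ^ 2 = 0 := by
        have hBne : B (k + 1) ≠ 0 := ne_of_gt hB1
        field_simp at cub
        linarith [cub]
      have key : t ^ 2 * B (k + 2) = a ^ 2 * (1 - t) * B (k + 1) := by
        rw [hB2]; linear_combination cub'
      rw [key]
      have hS : a ^ 2 * B (k + 1) * (n + 1) ≤ B 1 :=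
        (le_div_iff₀ (by linarith)).1 ih4
      have hSpos : 0 ≤ a ^ 2 * B (k + 1) := by positivity
      rw [le_div_iff₀ (by linarith : (0:ℝ) < n + 1 + 1)]
      have h5 : (1 - t) * (n + 2) ≤ n + 1 := by nlinarith
      have h6 := mul_le_mul_of_nonneg_left h5 hSpos
      nlinarith [h6, hS]
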